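/- If R is a nil-clean ring, then the element 2 = 1 + 1 is nilpotent in R, and consequently 2 lies in the Jacobson radical J(R). -/

import Mathlib

/-- An element of a ring is nil-clean if it is the sum of an idempotent and a nilpotent. -/
def IsNilCleanRing (R : Type*) [Ring R] : Prop :=
  ∀ a : R, ∃ e n : R, IsIdempotentElem e ∧ IsNilpotent n ∧ a = e + n

theorem two_nilpotent_of_nilClean (R : Type*) [Ring R] (h : IsNilCleanRing R) :
    IsNilpotent (2 : R) ∧ (2 : R) ∈ Ideal.jacobson (⊥ : Ideal R) := by
  obtain ⟨e, n, he, hn, hsum⟩ := h (-1)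
  have he' : e = -1 - n := by rw [eq_sub_iff_add_eq, ← hsum]
  have h2 : (-1 - n) * (-1 - n) = -1 - n := by rw [← he']; exact he
  have hz : (-1 - n) * (-1 - n) - (-1 - n) = 0 := sub_eq_zero.mpr h2
  have key : (2 : R) = -(n * (3 + n)) := by
    have : n * (3 + n) = ((-1 - n) * (-1 - n) - (-1 - n)) - 2 := by noncomm_ring; simp [two_smul]; norm_num
    rw [this, hz]; noncomm_ring
  have hcomm : Commute n (3 + n) := (Commute.ofNat_right n 3).add_right (Commute.refl n)
  have h2nil : IsNilpotent (2 : R) := by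
    rw [key]
    exact (hcomm.isNilpotent_mul_right hn).neg
  refine ⟨h2nil, Ideal.mem_jacobson_iff.mpr fun y => ?_⟩
  have hy : IsNilpotent (y * 2) := by
    have hc : Commute y (2 : R) := Commute.ofNat_right y 2
    exact hc.isNilpotent_mul_left h2nil
  obtain ⟨u, hu⟩ := hy.isUnit_add_one
  refine ⟨↑u⁻¹, ?_⟩
  have : (↑u⁻¹ : R) * (y * 2 + 1) = 1 := by rw [← hu]; exact u.inv_mul
  rw [Ideal.mem_bot, sub_eq_zero, ← this]
  noncomm_ring
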